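/- arXiv:2106.03440 — 2 statements merged into one kernel-verified Lean document; each statement's English description precedes it below -/
import Mathlib

section
/- For each n ≥ 1, letting h_a^b denote the complete homogeneous symmetric polynomial of degree a in the variables x_1,...,x_b, the ideal ⟨h_1^n, h_2^n, ..., h_n^n⟩ in Z[x_1,...,x_n] equals the ideal ⟨h_1^n, h_2^{n-1}, h_3^{n-1}, ..., h_n^{n-1}⟩. -/
/-- `h_a^b`: the sum of all monomials of degree `a` in the first `b` variables
`x_1, …, x_b` of `ℤ[x_1, …, x_n]`. -/
noncomputable def Hp (n a b : ℕ) : MvPolynomial (Fin n) ℤ :=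
  ∑ m ∈ (Finset.univ.filter fun i : Fin n => (i : ℕ) < b).sym a,
    ((m : Multiset (Fin n)).map MvPolynomial.X).prod

open Finset MvPolynomial

lemma sym_insert_sum {n : ℕ} (e : Fin n) (t : Finset (Fin n)) (he : e ∉ t) (a : ℕ) :
    ∑ m ∈ (insert e t).sym (a + 1), ((m : Multiset (Fin n)).map (X : Fin n → MvPolynomial (Fin n) ℤ)).prod
      = (∑ m ∈ t.sym (a + 1), ((m : Multiset (Fin n)).map (X : Fin n → MvPolynomial (Fin n) ℤ)).prod)
        + X e * ∑ m ∈ (insert e t).sym a, ((m : Multiset (Fin n)).map (X : Fin n → MvPolynomial (Fin n) ℤ)).prod := by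
  have hset : (insert e t).sym (a + 1)
      = t.sym (a + 1) ∪ ((insert e t).sym a).image (Sym.cons e) := by
    ext m
    simp only [mem_union, mem_image, mem_sym_iff, mem_insert]
    constructor
    · intro h
      by_cases hem : e ∈ m
      · right
        refine ⟨m.erase e hem, fun b hb => h b ?_, Sym.cons_erase hem⟩
        have : b ∈ (m.erase e hem : Multiset (Fin n)) := hb
        rw [Sym.coe_erase] at this
        exact Multiset.mem_of_mem_erase this
      · left
        intro b hb
        rcases h b hb with rfl | hbt
        · exact absurd hb hem
        · exact hbt
    · rintro (h | ⟨m', hm', rfl⟩)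
      · exact fun b hb => Or.inr (h b hb)
      · intro b hb
        rcases Sym.mem_cons.mp hb with rfl | hb
        · exact Or.inl rfl
        · exact hm' b hb
  have hdisj : Disjoint (t.sym (a + 1)) (((insert e t).sym a).image (Sym.cons e)) := by
    rw [Finset.disjoint_right]
    rintro m hm hm'
    obtain ⟨m', _, rfl⟩ := mem_image.mp hm
    exact he (mem_sym_iff.mp hm' e (Sym.mem_cons_self e m'))
  rw [hset, Finset.sum_union hdisj, Finset.sum_image (fun x _ y _ h => (Sym.cons_inj_right e x y).mp h)]
  congr 1
  rw [Finset.mul_sum]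
  refine Finset.sum_congr rfl fun m _ => ?_
  rw [Sym.coe_cons, Multiset.map_cons, Multiset.prod_cons]

lemma Hp_rec {n : ℕ} (a b : ℕ) (hb : b < n) :
    Hp n (a + 1) (b + 1) = Hp n (a + 1) b + X ⟨b, hb⟩ * Hp n a (b + 1) := by
  have hfil : (Finset.univ.filter fun i : Fin n => (i : ℕ) < b + 1)
      = insert ⟨b, hb⟩ (Finset.univ.filter fun i : Fin n => (i : ℕ) < b) := by
    ext i
    simp only [mem_filter, mem_univ, true_and, mem_insert]
    constructor
    · intro h
      rcases Nat.lt_succ_iff_lt_or_eq.mp h with h | h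
      · exact Or.inr h
      · exact Or.inl (Fin.ext h)
    · rintro (rfl | h)
      · exact Nat.lt_succ_self b
      · exact Nat.lt_succ_of_lt h
  have he : (⟨b, hb⟩ : Fin n) ∉ (Finset.univ.filter fun i : Fin n => (i : ℕ) < b) := by
    simp
  unfold Hp
  rw [hfil]
  exact sym_insert_sum _ _ he a

theorem stmt6 (n : ℕ) (hn : 1 ≤ n) :
    Ideal.span { p : MvPolynomial (Fin n) ℤ | ∃ a, 1 ≤ a ∧ a ≤ n ∧ p = Hp n a n } =
      Ideal.span (insert (Hp n 1 n)
        { p : MvPolynomial (Fin n) ℤ | ∃ a, 2 ≤ a ∧ a ≤ n ∧ p = Hp n a (n - 1) }) := by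
  obtain ⟨m, rfl⟩ : ∃ m, n = m + 1 := ⟨n - 1, (Nat.succ_pred_eq_of_pos hn).symm⟩
  have hm : m < m + 1 := Nat.lt_succ_self m
  have key : ∀ a : ℕ, Hp (m + 1) (a + 1) (m + 1)
      = Hp (m + 1) (a + 1) m + X ⟨m, hm⟩ * Hp (m + 1) a (m + 1) :=
    fun a => Hp_rec a m hm
  apply le_antisymm
  · have claim : ∀ a : ℕ, a ≤ m + 1 → 1 ≤ a →
        Hp (m + 1) a (m + 1) ∈ Ideal.span (insert (Hp (m+1) 1 (m+1))
          { p : MvPolynomial (Fin (m+1)) ℤ | ∃ b, 2 ≤ b ∧ b ≤ m + 1 ∧ p = Hp (m+1) b m }) := by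
      intro a
      induction a with
      | zero => intro _ h; exact absurd h (by omega)
      | succ a ih =>
        intro han _
        rcases Nat.eq_zero_or_pos a with rfl | ha
        · exact Ideal.subset_span (Set.mem_insert _ _)
        · have han' : a ≤ m + 1 := by omega
          have h1 : Hp (m + 1) (a + 1) m ∈ Ideal.span (insert (Hp (m+1) 1 (m+1))
              { p : MvPolynomial (Fin (m+1)) ℤ | ∃ b, 2 ≤ b ∧ b ≤ m + 1 ∧ p = Hp (m+1) b m }) := by
            apply Ideal.subset_span
            right
            exact ⟨a + 1, Nat.succ_le_succ ha, han, by simp⟩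
          have h2 := ih han' ha
          rw [key a]
          exact Ideal.add_mem _ h1 (Ideal.mul_mem_left _ _ h2)
    rw [Ideal.span_le]
    rintro p ⟨a, ha1, han, rfl⟩
    exact claim a han ha1
  · rw [Ideal.span_le]
    rintro p (rfl | ⟨a, ha2, han, rfl⟩)
    · exact Ideal.subset_span ⟨1, le_refl 1, hn, rfl⟩
    · obtain ⟨c, rfl⟩ : ∃ c, a = c + 1 := ⟨a - 1, (Nat.succ_pred_eq_of_pos (by omega)).symm⟩
      have h1 : Hp (m + 1) (c + 1) (m + 1) ∈ Ideal.span
          { p : MvPolynomial (Fin (m+1)) ℤ | ∃ b, 1 ≤ b ∧ b ≤ m + 1 ∧ p = Hp (m+1) b (m+1) } :=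
        Ideal.subset_span ⟨c + 1, Nat.le_add_left 1 c, han, rfl⟩
      have h2 : Hp (m + 1) c (m + 1) ∈ Ideal.span
          { p : MvPolynomial (Fin (m+1)) ℤ | ∃ b, 1 ≤ b ∧ b ≤ m + 1 ∧ p = Hp (m+1) b (m+1) } :=
        Ideal.subset_span ⟨c, by omega, by omega, rfl⟩
      have : Hp (m + 1) (c + 1) m
          = Hp (m + 1) (c + 1) (m + 1) - X ⟨m, hm⟩ * Hp (m + 1) c (m + 1) := by
        rw [key c]; ring
      rw [show (m + 1 - 1) = m from rfl, this]
      exact Ideal.sub_mem _ h1 (Ideal.mul_mem_left _ _ h2)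
end

section
/- For n ≥ 2, the quotient ring Z[x_1,...,x_n]/⟨h_1^n,...,h_n^n⟩ is isomorphic to Z[x_1,...,x_{n-1}]/⟨h_2^{n-1},...,h_n^{n-1}⟩, where h_a^b denotes the complete homogeneous symmetric polynomial of degree a in variables x_1,...,x_b; the isomorphism is induced by sending x_n to -(x_1+...+x_{n-1}). -/
open MvPolynomial Finset

/-- The ring homomorphism `ℤ[x_1,…,x_n] → ℤ[x_1,…,x_{n-1}]` fixing `x_1,…,x_{n-1}`
and sending `x_n` to `-(x_1 + ⋯ + x_{n-1})`. -/
noncomputable def elimLast (n : ℕ) :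
    MvPolynomial (Fin n) ℤ →+* MvPolynomial (Fin (n - 1)) ℤ :=
  MvPolynomial.eval₂Hom MvPolynomial.C fun i : Fin n =>
    if h : (i : ℕ) < n - 1 then MvPolynomial.X (⟨i, h⟩ : Fin (n - 1))
    else -(∑ j : Fin (n - 1), MvPolynomial.X j)

lemma Hp_eq_hsymm (m a : ℕ) : Hp m a m = MvPolynomial.hsymm (Fin m) ℤ a := by
  unfold Hp MvPolynomial.hsymm
  rw [Finset.filter_true_of_mem (fun i _ => i.isLt), Finset.sym_univ]
  rfl

lemma Hp_zero (m : ℕ) : Hp m 0 m = 1 := by rw [Hp_eq_hsymm]; exact hsymm_zero _ _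

lemma Hp_one (m : ℕ) : Hp m 1 m = ∑ i, X i := by rw [Hp_eq_hsymm]; exact hsymm_one _ _

lemma Hp_split (n a : ℕ) (hn : 1 ≤ n) :
    Hp n (a+1) n = Hp n (a+1) (n-1)
      + X (⟨n-1, by omega⟩ : Fin n) * Hp n a n := by
  set lst : Fin n := ⟨n-1, by omega⟩ with hlst
  have hfil : (Finset.univ.filter fun i : Fin n => (i : ℕ) < n) = Finset.univ :=
    Finset.filter_true_of_mem fun i _ => i.isLt
  have hdecomp : (Finset.univ : Finset (Fin n)).sym (a+1) =
      ((Finset.univ.filter fun i : Fin n => (i : ℕ) < n-1).sym (a+1)) ∪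
        ((Finset.univ : Finset (Fin n)).sym a).image (Sym.cons lst) := by
    ext m
    simp only [Finset.mem_union, Finset.mem_image, Finset.mem_sym_iff, Finset.mem_filter,
      Finset.mem_univ, true_and]
    constructor
    · intro _
      by_cases hl : lst ∈ m
      · obtain ⟨t, ht⟩ := Sym.exists_cons_of_mem hl
        exact Or.inr ⟨t, fun x _ => trivial, ht.symm⟩
      · left
        intro x hx
        have hxl : x ≠ lst := fun h => hl (h ▸ hx)
        have h1 : (x : ℕ) < n := x.isLt
        have h2 : (x : ℕ) ≠ n - 1 := fun h => hxl (Fin.ext h)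
        omega
    · intro _; exact fun x _ => trivial
  have hdisj : Disjoint ((Finset.univ.filter fun i : Fin n => (i : ℕ) < n-1).sym (a+1))
      (((Finset.univ : Finset (Fin n)).sym a).image (Sym.cons lst)) := by
    rw [Finset.disjoint_right]
    rintro m hm hm'
    obtain ⟨m', -, rfl⟩ := Finset.mem_image.mp hm
    have := (Finset.mem_sym_iff.mp hm') lst (Sym.mem_cons_self lst m')
    simp only [Finset.mem_filter] at this
    simp [hlst] at this
  unfold Hp
  rw [hfil, hdecomp, Finset.sum_union hdisj,
    Finset.sum_image (fun x _ y _ h => (Sym.cons_inj_right lst x y).mp h)]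
  congr 1
  rw [Finset.mul_sum]
  refine Finset.sum_congr rfl fun m _ => ?_
  rw [Sym.coe_cons, Multiset.map_cons, Multiset.prod_cons]

noncomputable def emb (n : ℕ) : MvPolynomial (Fin (n-1)) ℤ →+* MvPolynomial (Fin n) ℤ :=
  (MvPolynomial.rename (Fin.castLE (Nat.sub_le n 1))).toRingHom

lemma elim_emb (n : ℕ) : (elimLast n).comp (emb n) = RingHom.id _ := by
  apply MvPolynomial.ringHom_ext
  · intro z; simp [emb, elimLast]
  · intro i
    simp only [RingHom.comp_apply, emb, AlgHom.toRingHom_eq_coe, RingHom.coe_coe, rename_X,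
      elimLast, coe_eval₂Hom, eval₂_X, RingHom.id_apply]
    rw [dif_pos (show ((Fin.castLE (Nat.sub_le n 1) i : Fin n) : ℕ) < n - 1 from i.isLt)]
    exact congrArg X (Fin.ext rfl)

lemma emb_Hp (n a : ℕ) (hn : 2 ≤ n) : emb n (Hp (n-1) a (n-1)) = Hp n a (n-1) := by
  unfold Hp emb
  rw [Finset.filter_true_of_mem (fun (i : Fin (n-1)) _ => i.isLt)]
  simp only [AlgHom.toRingHom_eq_coe, RingHom.coe_coe, map_sum]
  refine Finset.sum_nbij' (fun m => Sym.map (Fin.castLE (Nat.sub_le n 1)) m)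
    (fun m => Sym.map (fun x : Fin n => (⟨min (x : ℕ) (n-2), by have := x.isLt; omega⟩ : Fin (n-1))) m)
    ?_ ?_ ?_ ?_ ?_
  · intro m _
    rw [Finset.mem_sym_iff]
    intro x hx
    obtain ⟨y, -, rfl⟩ := Sym.mem_map.mp hx
    simp only [Finset.mem_filter, Finset.mem_univ, true_and, Fin.coe_castLE]
    exact y.isLt
  · intro m _; simp [Finset.mem_sym_iff]
  · intro m _
    rw [Sym.map_map]
    have : ((fun x : Fin n => (⟨min (x : ℕ) (n-2), by have := x.isLt; omega⟩ : Fin (n-1))) ∘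
        Fin.castLE (Nat.sub_le n 1)) = id := by
      funext y
      have := y.isLt
      exact Fin.ext (by simp [Fin.coe_castLE]; omega)
    rw [this, Sym.map_id]
  · intro m hm
    rw [Sym.map_map]
    have hmem := Finset.mem_sym_iff.mp hm
    apply Sym.coe_injective
    rw [Sym.coe_map]
    conv_rhs => rw [show (m : Multiset (Fin n)) = Multiset.map id m by simp]
    apply Multiset.map_congr rfl
    intro x hx
    have := hmem x hx
    simp only [Finset.mem_filter, Finset.mem_univ, true_and] at this
    exact Fin.ext (by simp [Fin.coe_castLE]; omega)
  · intro m _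
    rw [Sym.coe_map, map_multiset_prod, Multiset.map_map, Multiset.map_map]
    congr 1
    apply Multiset.map_congr rfl
    intro x _
    simp

lemma elim_Hp_mid (n a : ℕ) (hn : 2 ≤ n) : elimLast n (Hp n a (n-1)) = Hp (n-1) a (n-1) := by
  rw [← emb_Hp n a hn]
  exact RingHom.congr_fun (elim_emb n) _

lemma elim_lastX (n : ℕ) (hn : 1 ≤ n) :
    elimLast n (X (⟨n-1, by omega⟩ : Fin n)) = -(∑ j : Fin (n-1), X j) := by
  simp only [elimLast, coe_eval₂Hom, eval₂_X]
  rw [dif_neg (by simp)]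

theorem stmt8 (n : ℕ) (hn : 2 ≤ n) :
    ∃ h : ∀ p ∈ Ideal.span { p : MvPolynomial (Fin n) ℤ | ∃ a, 1 ≤ a ∧ a ≤ n ∧ p = Hp n a n },
        ((Ideal.Quotient.mk (Ideal.span
          { q : MvPolynomial (Fin (n - 1)) ℤ | ∃ a, 2 ≤ a ∧ a ≤ n ∧ q = Hp (n - 1) a (n - 1) })).comp
          (elimLast n)) p = 0,
      Function.Bijective (Ideal.Quotient.lift
        (Ideal.span { p : MvPolynomial (Fin n) ℤ | ∃ a, 1 ≤ a ∧ a ≤ n ∧ p = Hp n a n })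
        ((Ideal.Quotient.mk (Ideal.span
          { q : MvPolynomial (Fin (n - 1)) ℤ | ∃ a, 2 ≤ a ∧ a ≤ n ∧ q = Hp (n - 1) a (n - 1) })).comp
          (elimLast n)) h) := by
  set I := Ideal.span { p : MvPolynomial (Fin n) ℤ | ∃ a, 1 ≤ a ∧ a ≤ n ∧ p = Hp n a n } with hI
  set J := Ideal.span { q : MvPolynomial (Fin (n-1)) ℤ |
    ∃ a, 2 ≤ a ∧ a ≤ n ∧ q = Hp (n-1) a (n-1) } with hJ
  have hn1 : 1 ≤ n := by omega
  set lst : Fin n := ⟨n-1, by omega⟩ with hlst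
  -- elim of h_1 is 0
  have helim1 : elimLast n (Hp n 1 n) = 0 := by
    have hs : Hp n 1 n = Hp n 1 (n-1) + X lst * Hp n 0 n := Hp_split n 0 hn1
    rw [hs, map_add, map_mul, elim_Hp_mid n 1 hn,
      elim_lastX n hn1, Hp_zero, map_one, mul_one, Hp_one]
    ring
  -- elim maps generators of I into J
  have helimHp : ∀ a, 1 ≤ a → a ≤ n → elimLast n (Hp n a n) ∈ J := by
    intro a
    induction a with
    | zero => omega
    | succ m ih =>
      intro _ hle
      rcases Nat.eq_zero_or_pos m with hm | hm
      · subst hm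
        rw [helim1]; exact J.zero_mem
      · rw [Hp_split n m hn1, map_add, map_mul, elim_Hp_mid n _ hn, elim_lastX n hn1]
        refine J.add_mem (Ideal.subset_span ⟨m+1, by omega, hle, rfl⟩) ?_
        exact J.mul_mem_left _ (ih hm (by omega))
  have hIle : I ≤ J.comap (elimLast n) := by
    rw [hI, Ideal.span_le]
    rintro p ⟨a, h1, h2, rfl⟩
    exact helimHp a h1 h2
  have h : ∀ p ∈ I, ((Ideal.Quotient.mk J).comp (elimLast n)) p = 0 := fun p hp =>
    Ideal.Quotient.eq_zero_iff_mem.2 (hIle hp)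
  refine ⟨h, ?_⟩
  -- emb maps generators of J into I
  have hJleI : J ≤ I.comap (emb n) := by
    rw [hJ, Ideal.span_le]
    rintro p ⟨a, h2a, han, rfl⟩
    simp only [SetLike.mem_coe, Ideal.mem_comap]
    obtain ⟨m, rfl⟩ : ∃ m, a = m + 1 := ⟨a - 1, by omega⟩
    rw [emb_Hp n _ hn]
    have := Hp_split n m hn1
    have hmem : Hp n (m+1) (n-1) = Hp n (m+1) n - X lst * Hp n m n := by
      rw [this]; ring
    rw [hmem]
    refine I.sub_mem (Ideal.subset_span ⟨m+1, by omega, han, rfl⟩) ?_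
    exact I.mul_mem_left _ (Ideal.subset_span ⟨m, by omega, by omega, rfl⟩)
  have hJle : ∀ q ∈ J, (Ideal.Quotient.mk I) (emb n q) = 0 := fun q hq =>
    Ideal.Quotient.eq_zero_iff_mem.2 (hJleI hq)
  set F := Ideal.Quotient.lift I ((Ideal.Quotient.mk J).comp (elimLast n)) h with hF
  set G := Ideal.Quotient.lift J ((Ideal.Quotient.mk I).comp (emb n)) hJle with hG
  -- key: mkI ∘ emb ∘ elim = mkI
  have key : (Ideal.Quotient.mk I).comp ((emb n).comp (elimLast n)) = Ideal.Quotient.mk I := by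
    apply MvPolynomial.ringHom_ext
    · intro z
      simp [elimLast, emb]
    · intro i
      by_cases hi : (i : ℕ) < n - 1
      · simp only [RingHom.comp_apply, elimLast, coe_eval₂Hom, eval₂_X]
        rw [dif_pos hi]
        simp only [emb, AlgHom.toRingHom_eq_coe, RingHom.coe_coe, rename_X]
        have hcast : (Fin.castLE (Nat.sub_le n 1) (⟨(i : ℕ), hi⟩ : Fin (n-1)) : Fin n) = i :=
          Fin.ext rfl
        rw [hcast]
      · have hival : i = lst := Fin.ext (by have := i.isLt; simp only [hlst]; omega)
        subst hival
        simp only [RingHom.comp_apply]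
        rw [hlst, elim_lastX n hn1]
        rw [map_neg]
        rw [← Hp_one (n-1)]
        rw [emb_Hp n _ hn]
        rw [Ideal.Quotient.mk_eq_mk_iff_sub_mem]
        have hsplit : Hp n 1 n = Hp n 1 (n-1) + X lst * Hp n 0 n := Hp_split n 0 hn1
        rw [Hp_zero, mul_one] at hsplit
        have : -Hp n 1 (n - 1) - X lst = -(Hp n 1 n) := by rw [hsplit]; ring
        rw [this]
        exact I.neg_mem (Ideal.subset_span ⟨1, le_refl 1, by omega, rfl⟩)
  constructor
  · -- injective, via left inverse G
    apply Function.LeftInverse.injective (g := G)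
    intro x
    obtain ⟨p, rfl⟩ := Ideal.Quotient.mk_surjective x
    show G (F (Ideal.Quotient.mk I p)) = Ideal.Quotient.mk I p
    rw [hF, Ideal.Quotient.lift_mk, RingHom.comp_apply, hG, Ideal.Quotient.lift_mk]
    exact RingHom.congr_fun key p
  · -- surjective
    intro y
    obtain ⟨q, rfl⟩ := Ideal.Quotient.mk_surjective y
    refine ⟨Ideal.Quotient.mk I (emb n q), ?_⟩
    rw [hF, Ideal.Quotient.lift_mk, RingHom.comp_apply]
    congr 1
    exact RingHom.congr_fun (elim_emb n) q
end
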